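/- Let σ_1 ≥ ... ≥ σ_p ≥ 0, r ≤ p, f ∈ [0,2], and s = r(1 − f/2) with s ≤ r an integer. Define E_rank² = Σ_{i=s+1}^{p} σ_i² and E_out² = f·Σ_{i=1}^{r} σ_i² + Σ_{i=r+1}^{p} σ_i². Then E_out² − E_rank² ≥ 0, i.e., the rank-masking error is at most the output-masking error lower bound. -/

import Mathlib

open Finset

/-- With `σ_1 ≥ ... ≥ σ_p ≥ 0`, `s ≤ r ≤ p`, `f = 2(1 − s/r) ∈ [0,2]`, the
rank-masking error `E_rank² = ∑_{i>s} σ i ^ 2` is at most the output-masking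
error lower bound `E_out² = f·∑_{i≤r} σ i ^ 2 + ∑_{i>r} σ i ^ 2`. -/
theorem rank_mask_error_le_output_mask (p r s : ℕ) (f : ℝ) (σ : ℕ → ℝ)
    (hr : 0 < r) (hsr : s ≤ r) (hrp : r ≤ p)
    (hnonneg : ∀ i, i < p → 0 ≤ σ i)
    (hmono : ∀ i j, i ≤ j → j < p → σ j ≤ σ i)
    (hf : f = 2 * (1 - (s : ℝ) / r)) :
    (0 ≤ f ∧ f ≤ 2) ∧
    (f * ∑ i ∈ Finset.range r, (σ i) ^ 2 + ∑ i ∈ Finset.Ico r p, (σ i) ^ 2)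
      - (∑ i ∈ Finset.Ico s p, (σ i) ^ 2) ≥ 0 := by
  have hrR : (0 : ℝ) < r := by exact_mod_cast hr
  have hsrR : (s : ℝ) ≤ r := by exact_mod_cast hsr
  have hsr' : (s : ℝ) / r ≤ 1 := by
    rw [div_le_one hrR]; exact hsrR
  have hs0 : (0 : ℝ) ≤ (s : ℝ) / r := by positivity
  have hfbounds : 0 ≤ f ∧ f ≤ 2 := by
    constructor <;> rw [hf] <;> nlinarith
  refine ⟨hfbounds, ?_⟩
  -- split sums
  have hsplit : ∑ i ∈ Finset.Ico s p, (σ i) ^ 2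
      = ∑ i ∈ Finset.Ico s r, (σ i) ^ 2 + ∑ i ∈ Finset.Ico r p, (σ i) ^ 2 := by
    rw [← Finset.sum_Ico_consecutive _ hsr hrp]
  have hrange : ∑ i ∈ Finset.range r, (σ i) ^ 2
      = ∑ i ∈ Finset.range s, (σ i) ^ 2 + ∑ i ∈ Finset.Ico s r, (σ i) ^ 2 := by
    rw [Finset.range_eq_Ico, Finset.range_eq_Ico]
    exact (Finset.sum_Ico_consecutive (fun i => (σ i) ^ 2) (Nat.zero_le s) hsr).symm
  set A := ∑ i ∈ Finset.range s, (σ i) ^ 2 with hA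
  set B := ∑ i ∈ Finset.Ico s r, (σ i) ^ 2 with hB
  have hA0 : 0 ≤ A := Finset.sum_nonneg fun i hi => sq_nonneg _
  have hB0 : 0 ≤ B := Finset.sum_nonneg fun i hi => sq_nonneg _
  rw [hsplit, hrange]
  ring_nf
  rcases eq_or_lt_of_le hsr with heq | hlt
  · subst heq
    have : B = 0 := by simp [hB]
    nlinarith [hfbounds.1, hfbounds.2]
  · -- s < r ≤ p
    have hsp : s < p := lt_of_lt_of_le hlt hrp
    have hσs : 0 ≤ σ s := hnonneg s hsp
    -- B ≤ (r - s) * (σ s)^2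
    have hBle : B ≤ (r - s : ℕ) * (σ s) ^ 2 := by
      have : B ≤ ∑ _i ∈ Finset.Ico s r, (σ s) ^ 2 := by
        apply Finset.sum_le_sum
        intro i hi
        rw [Finset.mem_Ico] at hi
        have hip : i < p := lt_of_lt_of_le hi.2 hrp
        have := hmono s i hi.1 hip
        have hi0 : 0 ≤ σ i := hnonneg i hip
        nlinarith
      simpa [Nat.card_Ico] using this
    -- s * (σ s)^2 ≤ A
    have hAge : (s : ℝ) * (σ s) ^ 2 ≤ A := by
      have : ∑ _i ∈ Finset.range s, (σ s) ^ 2 ≤ A := by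
        apply Finset.sum_le_sum
        intro i hi
        rw [Finset.mem_range] at hi
        have := hmono i s (le_of_lt hi) hsp
        have hi0 : 0 ≤ σ i := hnonneg i (lt_trans hi hsp)
        nlinarith
      simpa using this
    have hcast : ((r - s : ℕ) : ℝ) = (r : ℝ) - s := by
      have := Nat.cast_sub hsr (R := ℝ); simpa using this
    rw [hcast] at hBle
    -- goal: f*(A+B) - B ≥ 0 (up to ring_nf form); multiply out f
    have hfA : f = 2 * ((r : ℝ) - s) / r := by rw [hf]; field_simp
    have key : 0 ≤ f * (A + B) - B := by
      have h1 : 0 ≤ 2 * ((r:ℝ) - s) * (A + B) - r * B := by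
        nlinarith [sq_nonneg (σ s)]
      have h2 := div_nonneg h1 (le_of_lt hrR)
      have h3 : (2 * ((r:ℝ) - s) * (A + B) - r * B) / r = f * (A + B) - B := by
        rw [hfA]; field_simp
      linarith [h3 ▸ h2]
    nlinarith [key]
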